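/- The incoming and outgoing boundaries of the round-handle region are characterized as follows: {p ∈ P̃ : φ(t,p) ∉ P̃ for all t < 0} = {(x,y,z) ∈ P̃ : |y| = 1}, and {p ∈ P̃ : φ(t,p) ∉ P̃ for all t > 0} = {(x,y,z) ∈ P̃ : |x| = 1}. -/

import Mathlib

open Real Filter

/-- The point (a,b,c) in Euclidean 3-space. -/
noncomputable def pt (a b c : ℝ) : EuclideanSpace ℝ (Fin 3) :=
  (WithLp.equiv 2 (Fin 3 → ℝ)).symm ![a, b, c]

/-- The model flow φ(t,(x,y,z)) = (x·exp t, y·exp (−t), z + t). -/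
noncomputable def phi (t : ℝ) (p : EuclideanSpace ℝ (Fin 3)) : EuclideanSpace ℝ (Fin 3) :=
  pt (p 0 * Real.exp t) (p 1 * Real.exp (-t)) (p 2 + t)

/-- The round-handle region P̃ = {(x,y,z) : |x| ≤ 1, |y| ≤ 1, |x·y| ≤ 1/2}. -/
def Ptilde : Set (EuclideanSpace ℝ (Fin 3)) :=
  {p | |p 0| ≤ 1 ∧ |p 1| ≤ 1 ∧ |p 0 * p 1| ≤ 1/2}

lemma key (t : ℝ) (p : EuclideanSpace ℝ (Fin 3)) :
    phi t p ∈ Ptilde ↔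
      |p 0| * Real.exp t ≤ 1 ∧ |p 1| * Real.exp (-t) ≤ 1 ∧ |p 0 * p 1| ≤ 1/2 := by
  have h0 : phi t p 0 = p 0 * Real.exp t := rfl
  have h1 : phi t p 1 = p 1 * Real.exp (-t) := rfl
  simp only [Ptilde, Set.mem_setOf_eq, h0, h1, abs_mul, Real.abs_exp]
  have heq : |p 0| * Real.exp t * (|p 1| * Real.exp (-t)) = |p 0| * |p 1| := by
    rw [mul_mul_mul_comm, ← Real.exp_add]
    simp
  rw [heq]

/-- The incoming boundary of P̃ is {|y| = 1} and the outgoing boundary is {|x| = 1}. -/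
theorem stmt_7 :
    {p : EuclideanSpace ℝ (Fin 3) | p ∈ Ptilde ∧ ∀ t : ℝ, t < 0 → phi t p ∉ Ptilde} =
      {p : EuclideanSpace ℝ (Fin 3) | p ∈ Ptilde ∧ |p 1| = 1} ∧
    {p : EuclideanSpace ℝ (Fin 3) | p ∈ Ptilde ∧ ∀ t : ℝ, 0 < t → phi t p ∉ Ptilde} =
      {p : EuclideanSpace ℝ (Fin 3) | p ∈ Ptilde ∧ |p 0| = 1} := by
  constructor
  · ext p
    simp only [Set.mem_setOf_eq]
    constructor
    · rintro ⟨hp, H⟩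
      refine ⟨hp, ?_⟩
      by_contra hne
      have hlt : |p 1| < 1 := lt_of_le_of_ne hp.2.1 hne
      by_cases hy : p 1 = 0
      · refine H (-1) (by norm_num) ((key _ _).2 ⟨?_, ?_, hp.2.2⟩)
        · have he : Real.exp (-1 : ℝ) ≤ 1 := Real.exp_le_one_iff.mpr (by norm_num)
          have hep : (0:ℝ) < Real.exp (-1 : ℝ) := Real.exp_pos _
          nlinarith [abs_nonneg (p 0), hp.1]
        · simp [hy]
      · have hpos : 0 < |p 1| := abs_pos.mpr hy
        have htneg : Real.log |p 1| < 0 := Real.log_neg hpos hlt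
        have hexp : Real.exp (Real.log |p 1|) = |p 1| := Real.exp_log hpos
        refine H _ htneg ((key _ _).2 ⟨?_, ?_, hp.2.2⟩)
        · rw [hexp, ← abs_mul]
          linarith [hp.2.2]
        · rw [Real.exp_neg, hexp]
          field_simp
          exact le_rfl
    · rintro ⟨hp, hy⟩
      refine ⟨hp, fun t ht hmem => ?_⟩
      have h2 := ((key t p).1 hmem).2.1
      rw [hy, one_mul] at h2
      exact absurd h2 (not_le.mpr (Real.one_lt_exp_iff.mpr (by linarith)))
  · ext p
    simp only [Set.mem_setOf_eq]
    constructor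
    · rintro ⟨hp, H⟩
      refine ⟨hp, ?_⟩
      by_contra hne
      have hlt : |p 0| < 1 := lt_of_le_of_ne hp.1 hne
      by_cases hx : p 0 = 0
      · refine H 1 (by norm_num) ((key _ _).2 ⟨?_, ?_, hp.2.2⟩)
        · simp [hx]
        · have he : Real.exp (-1 : ℝ) ≤ 1 := Real.exp_le_one_iff.mpr (by norm_num)
          have hep : (0:ℝ) < Real.exp (-1 : ℝ) := Real.exp_pos _
          nlinarith [abs_nonneg (p 1), hp.2.1]
      · have hpos : 0 < |p 0| := abs_pos.mpr hx
        have htpos : 0 < -Real.log |p 0| := by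
          have := Real.log_neg hpos hlt
          linarith
        have hexp : Real.exp (-(-Real.log |p 0|)) = |p 0| := by
          rw [neg_neg]; exact Real.exp_log hpos
        refine H _ htpos ((key _ _).2 ⟨?_, ?_, hp.2.2⟩)
        · have : Real.exp (-Real.log |p 0|) = (|p 0|)⁻¹ := by
            rw [Real.exp_neg, Real.exp_log hpos]
          rw [this]
          field_simp
          exact le_rfl
        · rw [hexp]
          have : |p 1| * |p 0| = |p 0 * p 1| := by rw [abs_mul]; ring
          rw [this]
          linarith [hp.2.2]
    · rintro ⟨hp, hx⟩
      refine ⟨hp, fun t ht hmem => ?_⟩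
      have h2 := ((key t p).1 hmem).1
      rw [hx, one_mul] at h2
      exact absurd h2 (not_le.mpr (Real.one_lt_exp_iff.mpr ht))
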